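/- Define ψ₁(ρ) := (2 − ρ² − 2√(1−ρ²))/ρ⁴ and ψ₂(ρ) := (2 − ρ²)/ρ⁴. Then for every ρ ∈ (0,1), both ψ₁ and ψ₂ satisfy the ordinary differential equation (ρ²−1) u″(ρ) + (6ρ − 5/ρ) u′(ρ) + 6 u(ρ) = 0, and their Wronskian satisfies ψ₁(ρ) ψ₂′(ρ) − ψ₁′(ρ) ψ₂(ρ) = −2/(ρ⁵ √(1−ρ²)). -/

import Mathlib

noncomputable section

/-- `ψ₁(ρ) = (2 − ρ² − 2√(1−ρ²))/ρ⁴`. -/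
def psiOne (ρ : ℝ) : ℝ := (2 - ρ ^ 2 - 2 * Real.sqrt (1 - ρ ^ 2)) / ρ ^ 4

/-- `ψ₂(ρ) = (2 − ρ²)/ρ⁴`. -/
def psiTwo (ρ : ℝ) : ℝ := (2 - ρ ^ 2) / ρ ^ 4

def dOne (x : ℝ) : ℝ :=
  (8 - 6*x^2 + (2*x^2 - 8) * Real.sqrt (1 - x^2)) / (x^5 * Real.sqrt (1 - x^2))

def dTwo (x : ℝ) : ℝ := (2*x^2 - 8) / x^5

lemma sqrt_deriv {x : ℝ} (hx : x ∈ Set.Ioo (0:ℝ) 1) :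
    HasDerivAt (fun y : ℝ => Real.sqrt (1 - y^2)) (-x / Real.sqrt (1 - x^2)) x := by
  have h1 : (0:ℝ) < 1 - x^2 := by nlinarith [hx.1, hx.2]
  have hinner : HasDerivAt (fun y : ℝ => 1 - y^2) (-(2*x)) x := by
    simpa using (hasDerivAt_pow 2 x).const_sub 1
  have h := (Real.hasDerivAt_sqrt (ne_of_gt h1)).comp x hinner
  refine h.congr_deriv ?_
  symm
  have hs : Real.sqrt (1 - x^2) ≠ 0 := by positivity
  field_simp

lemma hasDerivAt_psiOne {x : ℝ} (hx : x ∈ Set.Ioo (0:ℝ) 1) :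
    HasDerivAt psiOne (dOne x) x := by
  have hx0 : x ≠ 0 := ne_of_gt hx.1
  have h1 : (0:ℝ) < 1 - x^2 := by nlinarith [hx.1, hx.2]
  set s := Real.sqrt (1 - x^2) with hsdef
  have hs0 : 0 < s := Real.sqrt_pos.mpr h1
  have hs2 : s^2 = 1 - x^2 := Real.sq_sqrt h1.le
  have hnum : HasDerivAt (fun y : ℝ => 2 - y^2 - 2 * Real.sqrt (1 - y^2))
      (-(2*x) - 2 * (-x / s)) x := by
    have h2 : HasDerivAt (fun y : ℝ => 2 - y^2) (-(2*x)) x := by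
      simpa using (hasDerivAt_pow 2 x).const_sub 2
    exact h2.sub ((sqrt_deriv hx).const_mul 2)
  have hden : HasDerivAt (fun y : ℝ => y^4) (4*x^3) x := by
    simpa using hasDerivAt_pow 4 x
  have h := hnum.div hden (pow_ne_zero 4 hx0)
  refine h.congr_deriv ?_
  symm
  unfold dOne
  rw [← hsdef]
  field_simp
  ring_nf
  linear_combination (-8) * hs2

lemma hasDerivAt_psiTwo {x : ℝ} (hx : x ∈ Set.Ioo (0:ℝ) 1) :
    HasDerivAt psiTwo (dTwo x) x := by
  have hx0 : x ≠ 0 := ne_of_gt hx.1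
  have hnum : HasDerivAt (fun y : ℝ => 2 - y^2) (-(2*x)) x := by
    simpa using (hasDerivAt_pow 2 x).const_sub 2
  have hden : HasDerivAt (fun y : ℝ => y^4) (4*x^3) x := by
    simpa using hasDerivAt_pow 4 x
  have h := hnum.div hden (pow_ne_zero 4 hx0)
  refine h.congr_deriv ?_
  symm
  unfold dTwo
  field_simp
  ring

lemma hasDerivAt_dTwo {x : ℝ} (hx : x ∈ Set.Ioo (0:ℝ) 1) :
    HasDerivAt dTwo ((40 - 6*x^2)/x^6) x := by
  have hx0 : x ≠ 0 := ne_of_gt hx.1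
  have hnum : HasDerivAt (fun y : ℝ => 2*y^2 - 8) (4*x) x := by
    have h := ((hasDerivAt_pow 2 x).const_mul 2).sub_const 8
    simpa using h.congr_deriv (by ring)
  have hden : HasDerivAt (fun y : ℝ => y^5) (5*x^4) x := by
    simpa using hasDerivAt_pow 5 x
  have h := hnum.div hden (pow_ne_zero 5 hx0)
  refine h.congr_deriv ?_
  symm
  field_simp
  ring

lemma hasDerivAt_dOne {x : ℝ} (hx : x ∈ Set.Ioo (0:ℝ) 1) :
    HasDerivAt dOne
      (((40 - 6*x^2) * (Real.sqrt (1 - x^2))^3 - 24*x^4 + 66*x^2 - 40)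
        / (x^6 * (Real.sqrt (1 - x^2))^3)) x := by
  have hx0 : x ≠ 0 := ne_of_gt hx.1
  have h1 : (0:ℝ) < 1 - x^2 := by nlinarith [hx.1, hx.2]
  set s := Real.sqrt (1 - x^2) with hsdef
  have hs0 : 0 < s := Real.sqrt_pos.mpr h1
  have hs2 : s^2 = 1 - x^2 := Real.sq_sqrt h1.le
  have hA : HasDerivAt (fun y : ℝ => 8 - 6*y^2) (-(12*x)) x := by
    have := ((hasDerivAt_pow 2 x).const_mul 6).const_sub 8
    simpa using this.congr_deriv (by ring)
  have hB : HasDerivAt (fun y : ℝ => (2*y^2 - 8) * Real.sqrt (1 - y^2))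
      ((4*x)*s + (2*x^2-8)*(-x/s)) x := by
    have hf : HasDerivAt (fun y : ℝ => 2*y^2 - 8) (4*x) x := by
      have h := ((hasDerivAt_pow 2 x).const_mul 2).sub_const 8
      simpa using h.congr_deriv (by ring)
    exact hf.mul (sqrt_deriv hx)
  have hN := hA.add hB
  have hD : HasDerivAt (fun y : ℝ => y^5 * Real.sqrt (1 - y^2))
      ((5*x^4)*s + x^5*(-x/s)) x := by
    have hp : HasDerivAt (fun y : ℝ => y^5) (5*x^4) x := by
      simpa using hasDerivAt_pow 5 x
    exact hp.mul (sqrt_deriv hx)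
  have hne : x^5 * s ≠ 0 := mul_ne_zero (pow_ne_zero 5 hx0) (ne_of_gt hs0)
  have h := hN.div hD hne
  refine h.congr_deriv ?_
  symm
  simp only [Pi.add_apply]
  rw [← hsdef]
  field_simp
  ring_nf
  linear_combination (40 - 18*x^2) * hs2

/-- `ψ₁, ψ₂` form a fundamental system of
`(ρ²−1)u″ + (6ρ − 5/ρ)u′ + 6u = 0` on `(0,1)`, with Wronskian
`ψ₁ψ₂′ − ψ₁′ψ₂ = −2/(ρ⁵√(1−ρ²))`. -/
theorem fundamental_system_lambda_one (ρ : ℝ) (hρ : ρ ∈ Set.Ioo (0:ℝ) 1) :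
    ((ρ ^ 2 - 1) * deriv (deriv psiOne) ρ + (6 * ρ - 5 / ρ) * deriv psiOne ρ
        + 6 * psiOne ρ = 0)
    ∧ ((ρ ^ 2 - 1) * deriv (deriv psiTwo) ρ + (6 * ρ - 5 / ρ) * deriv psiTwo ρ
        + 6 * psiTwo ρ = 0)
    ∧ (psiOne ρ * deriv psiTwo ρ - deriv psiOne ρ * psiTwo ρ
        = -2 / (ρ ^ 5 * Real.sqrt (1 - ρ ^ 2))) := by
  have hρ0 := hρ.1
  have hρ1 := hρ.2
  have hρne : ρ ≠ 0 := ne_of_gt hρ0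
  have h1 : (0:ℝ) < 1 - ρ^2 := by nlinarith
  set s := Real.sqrt (1 - ρ^2) with hsdef
  have hs0 : 0 < s := Real.sqrt_pos.mpr h1
  have hs2 : s^2 = 1 - ρ^2 := Real.sq_sqrt h1.le
  have hE1 : deriv psiOne =ᶠ[nhds ρ] dOne := by
    filter_upwards [isOpen_Ioo.mem_nhds hρ] with x hx
    exact (hasDerivAt_psiOne hx).deriv
  have hE2 : deriv psiTwo =ᶠ[nhds ρ] dTwo := by
    filter_upwards [isOpen_Ioo.mem_nhds hρ] with x hx
    exact (hasDerivAt_psiTwo hx).deriv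
  have hd1 : deriv psiOne ρ = dOne ρ := (hasDerivAt_psiOne hρ).deriv
  have hd2 : deriv psiTwo ρ = dTwo ρ := (hasDerivAt_psiTwo hρ).deriv
  have hdd1 : deriv (deriv psiOne) ρ
      = ((40 - 6*ρ^2) * s^3 - 24*ρ^4 + 66*ρ^2 - 40) / (ρ^6 * s^3) := by
    rw [hE1.deriv_eq]
    exact (hasDerivAt_dOne hρ).deriv
  have hdd2 : deriv (deriv psiTwo) ρ = (40 - 6*ρ^2)/ρ^6 := by
    rw [hE2.deriv_eq]
    exact (hasDerivAt_dTwo hρ).deriv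
  refine ⟨?_, ?_, ?_⟩
  · rw [hdd1, hd1]
    unfold dOne psiOne
    rw [← hsdef]
    field_simp
    ring_nf
    linear_combination ((66*ρ^2 - 24*ρ^4 - 40) - 12*ρ^2*s^2) * hs2
  · rw [hdd2, hd2]
    unfold dTwo psiTwo
    field_simp
    ring
  · rw [hd1, hd2]
    unfold dOne dTwo psiOne psiTwo
    rw [← hsdef]
    field_simp
    ring_nf
    linear_combination (16 - 4*ρ^2) * hs2
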